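/- Assume W is finite and that Lusztig's Conjectures P4 and P9 hold for (W,S,φ). Then every left cellular pair is strongly left cellular, and every right cellular pair is strongly right cellular. -/

import Mathlib

open scoped Classical

noncomputable section

namespace CellsCacti

/-- The group algebra `A = ℤ[𝔄]` of a totally ordered abelian group `𝔄`,
written exponentially: `A = ⊕_{a ∈ 𝔄} ℤ vᵃ`. -/
abbrev GA (𝔄 : Type*) [AddCommGroup 𝔄] [LinearOrder 𝔄] [IsOrderedAddMonoid 𝔄] := AddMonoidAlgebra ℤ 𝔄

variable {𝔄 : Type*} [AddCommGroup 𝔄] [LinearOrder 𝔄] [IsOrderedAddMonoid 𝔄]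

/-- The element `vᵃ` of `A = ℤ[𝔄]`. -/
def v (a : 𝔄) : GA 𝔄 := AddMonoidAlgebra.single a 1

/-- The bar involution of `A = ℤ[𝔄]`, determined by `vᵃ ↦ v⁻ᵃ`. -/
def Abar : GA 𝔄 ≃ₐ[ℤ] GA 𝔄 := AddMonoidAlgebra.domCongr ℤ ℤ (AddEquiv.neg 𝔄)

/-- `A_{<0} = ⊕_{a<0} ℤ vᵃ`, as a predicate on elements of `A`. -/
def Aneg (a : GA 𝔄) : Prop := ∀ γ ∈ a.coeff.support, γ < (0 : 𝔄)

variable {B : Type*} {W : Type*} [Group W] {M : CoxeterMatrix B}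

/-- The Iwahori–Hecke algebra `H = H(W,S,φ)` of a Coxeter system `(W,S)` (encoded by
a Mathlib `CoxeterSystem`) with weight function `φ`, together with its standard basis
`(T_w)`, the bar involution, and the Kazhdan–Lusztig basis `(C_w)`.  `H` is a ring and a
module over `A = ℤ[𝔄]`, the two structures being compatible. -/
structure Hecke (cs : CoxeterSystem M W) (𝔄 : Type*) [AddCommGroup 𝔄] [LinearOrder 𝔄] [IsOrderedAddMonoid 𝔄]
    (φ : B → 𝔄) (H : Type*) [Ring H] [Module (GA 𝔄) H] : Type _ where
  /-- `φ` is a positive weight function. -/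
  φ_pos : ∀ i : B, 0 < φ i
  /-- `φ` is constant on conjugacy classes of simple reflections. -/
  φ_conj : ∀ i j : B, (∃ w : W, w * cs.simple i * w⁻¹ = cs.simple j) → φ i = φ j
  /-- Scalars commute with left multiplication. -/
  smul_mul : ∀ (a : GA 𝔄) (x y : H), (a • x) * y = a • (x * y)
  /-- Scalars commute with right multiplication. -/
  mul_smul : ∀ (a : GA 𝔄) (x y : H), x * (a • y) = a • (x * y)
  /-- The standard basis `(T_w)_{w ∈ W}` of `H`. -/
  T : Module.Basis W (GA 𝔄) H
  T_one : T 1 = 1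
  /-- `T_w T_{w'} = T_{w w'}` when lengths add. -/
  T_mul : ∀ w w' : W, cs.length (w * w') = cs.length w + cs.length w' →
    T w * T w' = T (w * w')
  /-- The quadratic relation `(T_s - v^{φ(s)})(T_s + v^{-φ(s)}) = 0`. -/
  T_quad : ∀ i : B,
    (T (cs.simple i) - v (φ i) • 1) * (T (cs.simple i) + v (-(φ i)) • 1) = 0
  /-- The bar involution of `H`, an `Abar`-semilinear involutive ring automorphism
  with `bar T_w = T_{w⁻¹}⁻¹` (equivalently, determined by its values on the `T_s`). -/
  bar : H ≃+ H
  bar_mul : ∀ x y : H, bar (x * y) = bar x * bar y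
  bar_smul : ∀ (a : GA 𝔄) (x : H), bar (a • x) = Abar a • bar x
  bar_invol : ∀ x : H, bar (bar x) = x
  bar_T : ∀ i : B, bar (T (cs.simple i)) = T (cs.simple i) + (v (-(φ i)) - v (φ i)) • 1
  /-- The Kazhdan–Lusztig basis `(C_w)_{w ∈ W}` of `H`. -/
  C : Module.Basis W (GA 𝔄) H
  /-- Each `C_w` is invariant under the bar involution. -/
  C_bar : ∀ w : W, bar (C w) = C w
  /-- `C_w ≡ T_w` modulo `H_{<0} = ⊕_w A_{<0} T_w`. -/
  C_T : ∀ w u : W, Aneg (T.repr (C w - T w) u)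

namespace Hecke

variable {cs : CoxeterSystem M W} {φ : B → 𝔄} {H : Type*} [Ring H] [Module (GA 𝔄) H]

/-- The standard parabolic subgroup `W_I`, as a subset of `W`. -/
def parab (cs : CoxeterSystem M W) (I : Set B) : Set W :=
  (Subgroup.closure (cs.simple '' I) : Subgroup W)

/-- `x ∈ X_I`: `x` has minimal length in the coset `x W_I`. -/
def IsMinRep (cs : CoxeterSystem M W) (I : Set B) (x : W) : Prop :=
  ∀ u ∈ parab cs I, cs.length x ≤ cs.length (x * u)

/-- The `A`-span of the `C_w` for `w` in a subset `P ⊆ W`; for `P = W_I` this is the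
parabolic subalgebra `H_I` (whose Kazhdan–Lusztig basis is `(C_w)_{w ∈ W_I}`). -/
def Cspan (h : Hecke cs 𝔄 φ H) (P : Set W) : Submodule (GA 𝔄) H :=
  Submodule.span (GA 𝔄) (h.C '' P)

/-- The `A`-span of the `T_w` for `w` in a subset `P ⊆ W`; for `P = W_I` this is the
parabolic subalgebra `H_I`. -/
def Tspan (h : Hecke cs 𝔄 φ H) (P : Set W) : Submodule (GA 𝔄) H :=
  Submodule.span (GA 𝔄) (h.T '' P)

/-- The preorder `≤_L` of `(W_P, P, φ_P)` (take `P = Set.univ` for that of `(W,S,φ)`):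
the finest preorder such that each `⊕_{x ≤_L w} A C_x` is a left ideal. -/
def leftLE (h : Hecke cs 𝔄 φ H) (P : Set W) : W → W → Prop :=
  Relation.ReflTransGen
    (fun x y => x ∈ P ∧ y ∈ P ∧ ∃ a ∈ h.Cspan P, h.C.repr (a * h.C y) x ≠ 0)

/-- The preorder `≤_R`. -/
def rightLE (h : Hecke cs 𝔄 φ H) (P : Set W) : W → W → Prop :=
  Relation.ReflTransGen
    (fun x y => x ∈ P ∧ y ∈ P ∧ ∃ a ∈ h.Cspan P, h.C.repr (h.C y * a) x ≠ 0)

/-- The preorder `≤_LR`. -/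
def lrLE (h : Hecke cs 𝔄 φ H) (P : Set W) : W → W → Prop :=
  Relation.ReflTransGen
    (fun x y => x ∈ P ∧ y ∈ P ∧
      ∃ a ∈ h.Cspan P, ∃ b ∈ h.Cspan P, h.C.repr (a * h.C y * b) x ≠ 0)

/-- The equivalence `∼_L`; its classes are the left cells. -/
def leftEquiv (h : Hecke cs 𝔄 φ H) (P : Set W) (x y : W) : Prop :=
  h.leftLE P x y ∧ h.leftLE P y x

/-- The equivalence `∼_R`; its classes are the right cells. -/
def rightEquiv (h : Hecke cs 𝔄 φ H) (P : Set W) (x y : W) : Prop :=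
  h.rightLE P x y ∧ h.rightLE P y x

/-- The equivalence `∼_LR`; its classes are the two-sided cells. -/
def lrEquiv (h : Hecke cs 𝔄 φ H) (P : Set W) (x y : W) : Prop :=
  h.lrLE P x y ∧ h.lrLE P y x

/-- `Γ` is a left cell. -/
def IsLeftCell (h : Hecke cs 𝔄 φ H) (P : Set W) (Γ : Set W) : Prop :=
  ∃ w ∈ P, Γ = {x | h.leftEquiv P x w}

/-- `Γ` is a right cell. -/
def IsRightCell (h : Hecke cs 𝔄 φ H) (P : Set W) (Γ : Set W) : Prop :=
  ∃ w ∈ P, Γ = {x | h.rightEquiv P x w}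

/-- A sign map `W → {1,-1}`. -/
def IsSignMap (μ : W → ℤ) : Prop := ∀ w : W, μ w = 1 ∨ μ w = -1

/-- `(δ,μ)` is a *left cellular pair* for `(W_P, P, φ_P)` (Definition 4.1 of the paper;
take `P = Set.univ` for `(W,S,φ)`):  for every left cell `Γ`, (LC1) `δ(Γ)` is a left cell,
and (LC2) the `A`-linear map `H^L[Γ] → H^L[δ(Γ)]`, `c_w^L ↦ μ_w c_{δ(w)}^L`, is an
isomorphism of left `H`-modules.  Condition (LC2) is expressed concretely: `δ` is injective
on `Γ` (bijectivity of the map) and for every `a ∈ H` the coefficient of `c_{w'}` in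
`a ⬝ c_w` agrees, up to the signs, with that of `c_{δ(w')}` in `a ⬝ c_{δ(w)}`
(`H`-equivariance in the cell modules). -/
def IsLeftCellularPair (h : Hecke cs 𝔄 φ H) (P : Set W) (δ : W → W) (μ : W → ℤ) : Prop :=
  IsSignMap μ ∧
  ∀ Γ : Set W, h.IsLeftCell P Γ →
    h.IsLeftCell P (δ '' Γ) ∧ Set.InjOn δ Γ ∧
    ∀ a ∈ h.Cspan P, ∀ w ∈ Γ, ∀ w' ∈ Γ,
      h.C.repr (a * h.C w) w' = (μ w * μ w') • h.C.repr (a * h.C (δ w)) (δ w')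

/-- `(δ,μ)` is a *right cellular pair*. -/
def IsRightCellularPair (h : Hecke cs 𝔄 φ H) (P : Set W) (δ : W → W) (μ : W → ℤ) : Prop :=
  IsSignMap μ ∧
  ∀ Γ : Set W, h.IsRightCell P Γ →
    h.IsRightCell P (δ '' Γ) ∧ Set.InjOn δ Γ ∧
    ∀ a ∈ h.Cspan P, ∀ w ∈ Γ, ∀ w' ∈ Γ,
      h.C.repr (h.C w * a) w' = (μ w * μ w') • h.C.repr (h.C (δ w) * a) (δ w')

/-- `(δ,μ)` is a *strongly left cellular pair*: left cellular, and (LC3) `δ(w) ∼_R w`. -/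
def IsStronglyLeftCellularPair (h : Hecke cs 𝔄 φ H) (P : Set W) (δ : W → W) (μ : W → ℤ) :
    Prop :=
  h.IsLeftCellularPair P δ μ ∧ ∀ w ∈ P, h.rightEquiv P (δ w) w

/-- `(δ,μ)` is a *strongly right cellular pair*: right cellular, and `δ(w) ∼_L w`. -/
def IsStronglyRightCellularPair (h : Hecke cs 𝔄 φ H) (P : Set W) (δ : W → W) (μ : W → ℤ) :
    Prop :=
  h.IsRightCellularPair P δ μ ∧ ∀ w ∈ P, h.leftEquiv P (δ w) w

/-- `a` is Lusztig's `a`-function of `(W_P, P, φ_P)`: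
`a(z) = max_{x,y ∈ W_P} deg h_{x,y,z}`. -/
def IsAFun (h : Hecke cs 𝔄 φ H) (P : Set W) (a : W → 𝔄) : Prop :=
  ∀ z ∈ P, IsGreatest
    {d : 𝔄 | ∃ x ∈ P, ∃ y ∈ P, d ∈ (h.C.repr (h.C x * h.C y) z).coeff.support} (a z)

/-- Lusztig's Conjecture P1 for `(W_P, P, φ_P)`: `a(z) ≤ Δ(z) = -val p*_{1,z}`. -/
def ConjP1 (h : Hecke cs 𝔄 φ H) (P : Set W) (a : W → 𝔄) : Prop :=
  ∀ z ∈ P, ∃ d ∈ (h.T.repr (h.C z) 1).coeff.support, d ≤ -(a z)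

/-- Lusztig's Conjecture P4 for `(W_P, P, φ_P)`: `z' ≤_LR z ⟹ a(z') ≥ a(z)`. -/
def ConjP4 (h : Hecke cs 𝔄 φ H) (P : Set W) (a : W → 𝔄) : Prop :=
  ∀ z z' : W, z ∈ P → z' ∈ P → h.lrLE P z' z → a z ≤ a z'

/-- Lusztig's Conjecture P8 for `(W_P, P, φ_P)`: `h_{x,y,z} ≠ 0` implies
`x ∼_L y⁻¹`, `y ∼_L z` and `x ∼_R z`. -/
def ConjP8 (h : Hecke cs 𝔄 φ H) (P : Set W) : Prop :=
  ∀ x y z : W, x ∈ P → y ∈ P → z ∈ P → h.C.repr (h.C x * h.C y) z ≠ 0 →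
    h.leftEquiv P x y⁻¹ ∧ h.leftEquiv P y z ∧ h.rightEquiv P x z

/-- Lusztig's Conjecture P9 for `(W_P, P, φ_P)`: `z' ≤_L z` and `a(z') = a(z)` imply
`z' ∼_L z`. -/
def ConjP9 (h : Hecke cs 𝔄 φ H) (P : Set W) (a : W → 𝔄) : Prop :=
  ∀ z z' : W, z ∈ P → z' ∈ P → h.leftLE P z' z → a z' = a z → h.leftEquiv P z' z

/-- `w0` is the longest element of `W_P`. -/
def IsLongest (cs : CoxeterSystem M W) (P : Set W) (w0 : W) : Prop :=
  w0 ∈ P ∧ ∀ u ∈ P, cs.length u ≤ cs.length w0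

/-- The characterization of the Mathas–Lusztig maps `λ_I`, `ρ_I`, `η^I` of
`(W_I, I, φ_I)` (Theorem 4.3 of the paper), for `P = W_I`, `wI` the longest element of
`W_I` and `aI` Lusztig's `a`-function of `(W_I, I, φ_I)`:
`v^{α_I(w)} T_{w_I} C_w ≡ η^I_w C_{ρ_I(w)}` and
`v^{α_I(w)} C_w T_{w_I} ≡ η^I_w C_{λ_I(w)}` modulo `H_I^{<_LR w}`, where
`α_I(w) = a_I(w_I w) - a_I(w)`. -/
def IsMLTriple (h : Hecke cs 𝔄 φ H) (P : Set W) (wI : W) (aI : W → 𝔄)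
    (lam rho : W → W) (η : W → ℤ) : Prop :=
  IsSignMap η ∧
  (∀ w ∈ P, lam w ∈ P ∧ rho w ∈ P) ∧
  ∀ w ∈ P,
    v (aI (wI * w) - aI w) • (h.T wI * h.C w) - η w • h.C (rho w) ∈
      Submodule.span (GA 𝔄)
        (h.C '' {u | u ∈ P ∧ h.lrLE P u w ∧ ¬ h.lrLE P w u}) ∧
    v (aI (wI * w) - aI w) • (h.C w * h.T wI) - η w • h.C (lam w) ∈
      Submodule.span (GA 𝔄)
        (h.C '' {u | u ∈ P ∧ h.lrLE P u w ∧ ¬ h.lrLE P w u})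

-- ============ auxiliary development ============
section Aux

variable (h : Hecke cs 𝔄 φ H)

theorem aux_smulCommClass (h : Hecke cs 𝔄 φ H) : SMulCommClass (GA 𝔄) H H :=
  ⟨fun a x y => (h.mul_smul a x y).symm⟩

theorem aux_isScalarTower (h : Hecke cs 𝔄 φ H) : IsScalarTower (GA 𝔄) H H :=
  ⟨fun a x y => h.smul_mul a x y⟩

theorem cspan_univ (h : Hecke cs 𝔄 φ H) : h.Cspan Set.univ = ⊤ := by
  rw [Cspan, Set.image_univ, h.C.span_eq]

/-- right multiplication as a linear map -/
def rmulL (y : H) : H →ₗ[GA 𝔄] H where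
  toFun x := x * y
  map_add' a b := add_mul a b y
  map_smul' c a := h.smul_mul c a y

/-- left multiplication as a linear map -/
def lmulL (x : H) : H →ₗ[GA 𝔄] H where
  toFun y := x * y
  map_add' a b := mul_add x a b
  map_smul' c a := h.mul_smul c x a

@[simp] lemma rmulL_apply (y x : H) : h.rmulL y x = x * y := rfl
@[simp] lemma lmulL_apply (x y : H) : h.lmulL x y = x * y := rfl

omit [Group W] in
/-- expansion of a linear functional along a basis -/
theorem linear_expand [Fintype W] (b : Module.Basis W (GA 𝔄) H) (F : H →ₗ[GA 𝔄] (GA 𝔄)) (x : H) :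
    F x = ∑ u : W, b.repr x u * F (b u) := by
  conv_lhs => rw [← b.sum_repr x]
  rw [map_sum]
  refine Finset.sum_congr rfl fun u _ => ?_
  rw [map_smul, smul_eq_mul]

/-- extraction: a nonzero coefficient of `x * y` comes through some basis element of `y` -/
theorem exists_mid_left [Fintype W] (h : Hecke cs 𝔄 φ H) {x y : H} {w : W}
    (hne : h.C.repr (x * y) w ≠ 0) :
    ∃ m : W, h.C.repr y m ≠ 0 ∧ h.C.repr (x * h.C m) w ≠ 0 := by
  by_contra hcon
  push_neg at hcon
  apply hne
  have := linear_expand h.C ((Finsupp.lapply w).comp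
    ((h.C.repr.toLinearMap).comp (h.lmulL x))) y
  simp only [LinearMap.comp_apply, LinearEquiv.coe_toLinearMap, Finsupp.lapply_apply,
    lmulL_apply] at this
  rw [this]
  apply Finset.sum_eq_zero
  intro m _
  by_cases hm : h.C.repr y m = 0
  · rw [hm, zero_mul]
  · rw [hcon m hm, mul_zero]

theorem exists_mid_right [Fintype W] (h : Hecke cs 𝔄 φ H) {x y : H} {w : W}
    (hne : h.C.repr (y * x) w ≠ 0) :
    ∃ m : W, h.C.repr y m ≠ 0 ∧ h.C.repr (h.C m * x) w ≠ 0 := by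
  by_contra hcon
  push_neg at hcon
  apply hne
  have := linear_expand h.C ((Finsupp.lapply w).comp
    ((h.C.repr.toLinearMap).comp (h.rmulL x))) y
  simp only [LinearMap.comp_apply, LinearEquiv.coe_toLinearMap, Finsupp.lapply_apply,
    rmulL_apply] at this
  rw [this]
  apply Finset.sum_eq_zero
  intro m _
  by_cases hm : h.C.repr y m = 0
  · rw [hm, zero_mul]
  · rw [hcon m hm, mul_zero]

end Aux


-- ============ specialization v ↦ 1 ============
section Sigma

/-- the ring homomorphism `A → ℤ` sending every `vᵃ` to `1` -/
def sig : GA 𝔄 →+* ℤ :=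
  AddMonoidAlgebra.liftNCRingHom (RingHom.id ℤ) 1 (fun _ _ => Commute.all _ _)

@[simp] lemma sig_single (a : 𝔄) (n : ℤ) : sig (AddMonoidAlgebra.single a n) = n := by
  simp [sig, AddMonoidAlgebra.liftNCRingHom, AddMonoidAlgebra.liftNC_single]

@[simp] lemma sig_v (a : 𝔄) : sig (v a) = 1 := by simp [v]

lemma T_simple_sq (h : Hecke cs 𝔄 φ H) (i : B) :
    h.T (cs.simple i) * h.T (cs.simple i)
      = 1 + (v (φ i) - v (-(φ i))) • h.T (cs.simple i) := by
  set Ts := h.T (cs.simple i) with hTs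
  have e1 : Ts * (v (-(φ i)) • (1:H)) = v (-(φ i)) • Ts := by
    rw [h.mul_smul, mul_one]
  have e2 : (v (φ i) • (1:H)) * Ts = v (φ i) • Ts := by
    rw [h.smul_mul, one_mul]
  have e3 : (v (φ i) • (1:H)) * (v (-(φ i)) • (1:H)) = (1:H) := by
    rw [h.mul_smul, mul_one, smul_smul]
    have hv1 : v (-(φ i)) * v (φ i) = (1 : GA 𝔄) := by
      rw [v, v, AddMonoidAlgebra.single_mul_single, neg_add_cancel, mul_one]
      rfl
    rw [hv1, one_smul]
  have hq := h.T_quad i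
  rw [← hTs, sub_mul, mul_add, mul_add, e1, e2, e3, sub_eq_zero] at hq
  have : Ts * Ts = (v (φ i) • Ts + 1) - v (-(φ i)) • Ts := eq_sub_of_add_eq hq
  rw [this, sub_smul]
  abel

lemma T_mul_simple_not_descent (h : Hecke cs 𝔄 φ H) {u : W} {i : B}
    (hd : ¬ cs.IsRightDescent u i) :
    h.T u * h.T (cs.simple i) = h.T (u * cs.simple i) := by
  apply h.T_mul
  rw [cs.not_isRightDescent_iff.mp hd, cs.length_simple]

lemma T_mul_simple_descent (h : Hecke cs 𝔄 φ H) {u : W} {i : B}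
    (hd : cs.IsRightDescent u i) :
    h.T u * h.T (cs.simple i)
      = h.T (u * cs.simple i) + (v (φ i) - v (-(φ i))) • h.T u := by
  have hlen : cs.length (u * cs.simple i) + 1 = cs.length u := cs.isRightDescent_iff.mp hd
  have hu : (u * cs.simple i) * cs.simple i = u := by
    rw [mul_assoc, cs.simple_mul_simple_self, mul_one]
  have hT : h.T (u * cs.simple i) * h.T (cs.simple i) = h.T u := by
    rw [h.T_mul _ _ (by rw [hu, cs.length_simple]; omega), hu]
  calc h.T u * h.T (cs.simple i)
      = h.T (u * cs.simple i) * (h.T (cs.simple i) * h.T (cs.simple i)) := by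
        rw [← mul_assoc, hT]
    _ = h.T (u * cs.simple i) * (1 + (v (φ i) - v (-(φ i))) • h.T (cs.simple i)) := by
        rw [h.T_simple_sq]
    _ = h.T (u * cs.simple i) + (v (φ i) - v (-(φ i))) • h.T u := by
        rw [mul_add, mul_one, h.mul_smul, hT]

omit [AddCommGroup 𝔄] [LinearOrder 𝔄] [IsOrderedAddMonoid 𝔄] in
lemma sig_aux (p : Prop) [Decidable p] : True := trivial

lemma sig_repr_T_mul_simple (h : Hecke cs 𝔄 φ H) [Fintype W] (x : H) (i : B) (w : W) :
    sig (h.T.repr (x * h.T (cs.simple i)) w) = sig (h.T.repr x (w * cs.simple i)) := by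
  have hexp := linear_expand h.T ((Finsupp.lapply w).comp
    ((h.T.repr.toLinearMap).comp (h.rmulL (h.T (cs.simple i))))) x
  simp only [LinearMap.comp_apply, LinearEquiv.coe_toLinearMap, Finsupp.lapply_apply,
    rmulL_apply] at hexp
  rw [hexp, map_sum]
  have hterm : ∀ u : W, sig (h.T.repr (h.T u * h.T (cs.simple i)) w)
      = if u = w * cs.simple i then 1 else 0 := by
    intro u
    have hiff : u * cs.simple i = w ↔ u = w * cs.simple i := by
      constructor
      · rintro rfl; rw [mul_assoc, cs.simple_mul_simple_self, mul_one]
      · rintro rfl; rw [mul_assoc, cs.simple_mul_simple_self, mul_one]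
    by_cases hd : cs.IsRightDescent u i
    · rw [h.T_mul_simple_descent hd, map_add, map_smul, h.T.repr_self, h.T.repr_self]
      simp only [Finsupp.add_apply, Finsupp.smul_apply, Finsupp.single_apply, smul_eq_mul]
      rw [map_add, map_mul]
      have hsig0 : sig (v (φ i) - v (-(φ i))) = 0 := by
        rw [map_sub, sig_v, sig_v, sub_self]
      rw [hsig0, zero_mul, add_zero]
      by_cases he : u * cs.simple i = w
      · rw [if_pos he, if_pos (hiff.mp he), map_one]
      · rw [if_neg he, if_neg (fun hh => he (hiff.mpr hh)), map_zero]
    · rw [h.T_mul_simple_not_descent hd, h.T.repr_self, Finsupp.single_apply]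
      by_cases he : u * cs.simple i = w
      · rw [if_pos he, if_pos (hiff.mp he), map_one]
      · rw [if_neg he, if_neg (fun hh => he (hiff.mpr hh)), map_zero]
  calc ∑ u : W, sig (h.T.repr x u * h.T.repr (h.T u * h.T (cs.simple i)) w)
      = ∑ u : W, sig (h.T.repr x u) * (if u = w * cs.simple i then 1 else 0) := by
        refine Finset.sum_congr rfl fun u _ => ?_
        rw [map_mul, hterm u]
    _ = sig (h.T.repr x (w * cs.simple i)) := by
        simp [mul_ite]

lemma sig_repr_mul_T (h : Hecke cs 𝔄 φ H) [Fintype W] (x : H) (y w : W) :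
    sig (h.T.repr (x * h.T y) w) = sig (h.T.repr x (w * y⁻¹)) := by
  obtain ⟨n, hn⟩ : ∃ n, cs.length y = n := ⟨_, rfl⟩
  induction n using Nat.strong_induction_on generalizing x y w with
  | _ n ih =>
    rcases eq_or_ne y 1 with rfl | hy
    · rw [h.T_one, mul_one, inv_one, mul_one]
    · obtain ⟨i, hi⟩ := cs.exists_rightDescent_of_ne_one hy
      have hlen : cs.length (y * cs.simple i) + 1 = cs.length y := cs.isRightDescent_iff.mp hi
      have hy' : (y * cs.simple i) * cs.simple i = y := by
        rw [mul_assoc, cs.simple_mul_simple_self, mul_one]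
      have hTy : h.T y = h.T (y * cs.simple i) * h.T (cs.simple i) := by
        rw [h.T_mul _ _ (by rw [hy', cs.length_simple]; omega), hy']
      rw [hTy, ← mul_assoc, h.sig_repr_T_mul_simple,
        ih (cs.length (y * cs.simple i)) (by omega) x (y * cs.simple i)
          (w * cs.simple i) rfl]
      congr 2
      rw [mul_inv_rev, cs.inv_simple, ← mul_assoc, mul_assoc w, cs.simple_mul_simple_self,
        mul_one]
end Sigma

-- ============ the trace form and the key non-vanishing ============
section Key

/-- left multiplication, as a bilinear map -/
def lmulLL (h : Hecke cs 𝔄 φ H) : H →ₗ[GA 𝔄] H →ₗ[GA 𝔄] H :=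
  LinearMap.mk₂ (GA 𝔄) (fun x y => x * y) add_mul h.smul_mul mul_add h.mul_smul

@[simp] lemma lmulLL_apply (h : Hecke cs 𝔄 φ H) (x y : H) : h.lmulLL x y = x * y := rfl

lemma lmulLL_mul (h : Hecke cs 𝔄 φ H) (x y : H) :
    h.lmulLL (x * y) = h.lmulLL x * h.lmulLL y := by
  apply LinearMap.ext
  intro z
  simp [mul_assoc, Module.End.mul_apply]

/-- the trace form functional `x ↦ Tr(L_x)` -/
def TformL (h : Hecke cs 𝔄 φ H) : H →ₗ[GA 𝔄] GA 𝔄 :=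
  (LinearMap.trace (GA 𝔄) H).comp h.lmulLL

@[simp] lemma TformL_apply (h : Hecke cs 𝔄 φ H) (x : H) :
    h.TformL x = LinearMap.trace (GA 𝔄) H (h.lmulLL x) := rfl

lemma TformL_swap (h : Hecke cs 𝔄 φ H) (x y : H) :
    h.TformL (x * y) = h.TformL (y * x) := by
  rw [TformL_apply, TformL_apply, lmulLL_mul, lmulLL_mul, LinearMap.trace_mul_comm]

variable [Fintype W]

/-- the Gram matrix of the trace form in the standard basis -/
def gram (h : Hecke cs 𝔄 φ H) : Matrix W W (GA 𝔄) :=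
  Matrix.of fun u w => h.TformL (h.T u * h.T w)

lemma sig_gram (h : Hecke cs 𝔄 φ H) (u w : W) :
    sig (h.gram u w) = if u = w⁻¹ then (Fintype.card W : ℤ) else 0 := by
  rw [gram, Matrix.of_apply, TformL_apply,
    LinearMap.trace_eq_matrix_trace (GA 𝔄) h.T, Matrix.trace]
  simp only [Matrix.diag_apply, LinearMap.toMatrix_apply, lmulLL_apply]
  rw [map_sum]
  have hterm : ∀ x : W, sig (h.T.repr ((h.T u * h.T w) * h.T x) x)
      = if u = w⁻¹ then 1 else 0 := by
    intro x
    rw [h.sig_repr_mul_T, mul_inv_cancel, h.sig_repr_mul_T, one_mul, h.T.repr_self,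
      Finsupp.single_apply]
    by_cases he : u = w⁻¹
    · rw [if_pos he, if_pos he, map_one]
    · rw [if_neg he, if_neg he, map_zero]
  rw [Finset.sum_congr rfl fun x _ => hterm x]
  rw [Finset.sum_const, Finset.card_univ]
  by_cases he : u = w⁻¹
  · rw [if_pos he, if_pos he]; simp
  · rw [if_neg he, if_neg he]; simp

lemma gram_det_ne_zero (h : Hecke cs 𝔄 φ H) : (h.gram).det ≠ 0 := by
  intro h0
  have hσ : ((h.gram).map (sig : GA 𝔄 →+* ℤ)).det = 0 := by
    have h1 : sig ((h.gram).det) = 0 := by rw [h0, map_zero]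
    rwa [RingHom.map_det, RingHom.mapMatrix_apply] at h1
  have hmap : (h.gram).map sig = (Fintype.card W : ℤ) • (Equiv.inv W).permMatrix ℤ := by
    ext u w
    rw [Matrix.map_apply, sig_gram, Matrix.smul_apply]
    have hP : ((Equiv.inv W).permMatrix ℤ) u w = if u⁻¹ = w then 1 else 0 := by
      simp [Equiv.Perm.permMatrix, PEquiv.toMatrix_apply, Equiv.toPEquiv_apply, Equiv.inv]
    rw [hP]
    by_cases he : u = w⁻¹
    · rw [if_pos he, if_pos (by rw [he, inv_inv]), smul_eq_mul, mul_one]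
    · rw [if_neg he, if_neg (fun hh => he (by rw [← hh, inv_inv])), smul_eq_mul, mul_zero]
  rw [hmap, Matrix.det_smul, Matrix.det_permutation] at hσ
  rcases mul_eq_zero.mp hσ with hc | hs
  · exact pow_ne_zero _ (Int.natCast_ne_zero.mpr Fintype.card_ne_zero) hc
  · exact Units.ne_zero _ hs

/-- the "dual" element implementing `det • (coefficient of C_z)` via the trace form -/
def dualD (h : Hecke cs 𝔄 φ H) (z : W) : H :=
  ∑ u : W, ((h.gram).adjugate.mulVec (fun x => h.C.repr (h.T x) z) u) • h.T u

lemma Tform_basis_mul_dualD (h : Hecke cs 𝔄 φ H) (z u : W) :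
    h.TformL (h.T u * h.dualD z) = (h.gram).det * h.C.repr (h.T u) z := by
  rw [dualD, Finset.mul_sum]
  have hterm : ∀ x : W, h.T u * ((h.gram).adjugate.mulVec (fun y => h.C.repr (h.T y) z) x • h.T x)
      = ((h.gram).adjugate.mulVec (fun y => h.C.repr (h.T y) z) x) • (h.T u * h.T x) := by
    intro x; rw [h.mul_smul]
  rw [Finset.sum_congr rfl fun x _ => hterm x, map_sum]
  have : ∀ x : W, h.TformL (((h.gram).adjugate.mulVec (fun y => h.C.repr (h.T y) z) x) • (h.T u * h.T x))
      = h.gram u x * ((h.gram).adjugate.mulVec (fun y => h.C.repr (h.T y) z)) x := by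
    intro x; rw [map_smul, smul_eq_mul, mul_comm]; rfl
  rw [Finset.sum_congr rfl fun x _ => this x]
  have hmv : ∑ x : W, h.gram u x * ((h.gram).adjugate.mulVec (fun y => h.C.repr (h.T y) z)) x
      = ((h.gram * (h.gram).adjugate).mulVec (fun y => h.C.repr (h.T y) z)) u := by
    rw [← Matrix.mulVec_mulVec]
    simp [Matrix.mulVec, dotProduct]
  rw [hmv, Matrix.mul_adjugate, Matrix.smul_mulVec, Matrix.one_mulVec]
  simp

lemma Tform_mul_dualD (h : Hecke cs 𝔄 φ H) (z : W) (x : H) :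
    h.TformL (x * h.dualD z) = (h.gram).det * h.C.repr x z := by
  have hlin : (h.TformL.comp (h.rmulL (h.dualD z)))
      = (h.gram).det • ((Finsupp.lapply z).comp (h.C.repr.toLinearMap)) := by
    apply h.T.ext
    intro u
    simp only [LinearMap.comp_apply, rmulL_apply, LinearMap.smul_apply,
      LinearEquiv.coe_toLinearMap, Finsupp.lapply_apply, smul_eq_mul]
    exact h.Tform_basis_mul_dualD z u
  have := LinearMap.congr_fun hlin x
  simpa using this

theorem key_nonzero (h : Hecke cs 𝔄 φ H) (z : W) :
    ∃ w : W, h.C.repr (h.C z * h.C w * h.C z) z ≠ 0 := by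
  haveI : Module.Free (GA 𝔄) H := Module.Free.of_basis h.T
  haveI : Module.Finite (GA 𝔄) H := Module.Finite.of_basis h.T
  by_contra hcon
  push_neg at hcon
  -- every `a` gives a vanishing coefficient
  have stepA : ∀ a : H, h.C.repr (h.C z * a * h.C z) z = 0 := by
    intro a
    have hexp := linear_expand h.C ((Finsupp.lapply z).comp
      ((h.C.repr.toLinearMap).comp ((h.rmulL (h.C z)).comp (h.lmulL (h.C z))))) a
    simp only [LinearMap.comp_apply, LinearEquiv.coe_toLinearMap, Finsupp.lapply_apply,
      rmulL_apply, lmulL_apply] at hexp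
    rw [hexp]
    exact Finset.sum_eq_zero fun w _ => by rw [hcon w, mul_zero]
  set D := h.dualD z with hD
  have stepB : ∀ a : H, h.TformL ((h.C z * D * h.C z) * a) = 0 := by
    intro a
    have h1 : (h.C z * D * h.C z) * a = (h.C z * D) * (h.C z * a) := by
      rw [mul_assoc]
    rw [h1, h.TformL_swap]
    have h2 : (h.C z * a) * (h.C z * D) = ((h.C z * a * h.C z)) * D := by
      rw [← mul_assoc]
    rw [h2, h.Tform_mul_dualD, stepA, mul_zero]
  have stepC : h.C z * D * h.C z = 0 := by
    set x0 := h.C z * D * h.C z with hx0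
    have hrow : ∀ w : W, ∑ u : W, h.T.repr x0 u * h.gram u w = 0 := by
      intro w
      have hexp := linear_expand h.T (h.TformL.comp (h.rmulL (h.T w))) x0
      simp only [LinearMap.comp_apply, rmulL_apply] at hexp
      have heq : ∑ u : W, h.T.repr x0 u * h.gram u w = h.TformL (x0 * h.T w) := by
        rw [hexp]; rfl
      rw [heq]
      exact stepB (h.T w)
    have hvm : Matrix.vecMul (fun u => h.T.repr x0 u) h.gram = 0 := by
      funext w
      rw [Matrix.vecMul, dotProduct]
      exact hrow w
    have h2 : Matrix.vecMul (Matrix.vecMul (fun u => h.T.repr x0 u) h.gram)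
        ((h.gram).adjugate) = 0 := by
      rw [hvm, Matrix.zero_vecMul]
    rw [Matrix.vecMul_vecMul, Matrix.mul_adjugate] at h2
    have h3 : ∀ u : W, (h.gram).det * h.T.repr x0 u = 0 := by
      intro u
      have hcf := congrFun h2 u
      simp only [Matrix.vecMul, dotProduct, Matrix.smul_apply, Matrix.one_apply,
        smul_eq_mul, mul_ite, mul_one, mul_zero, Finset.sum_ite_eq, Finset.mem_univ,
        if_true, Pi.zero_apply] at hcf
      rw [Finset.sum_ite_eq' Finset.univ u (fun x => h.T.repr x0 x * h.gram.det)] at hcf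
      simp only [Finset.mem_univ, if_true] at hcf
      rw [mul_comm]
      exact hcf
    have h4 : ∀ u : W, h.T.repr x0 u = 0 := by
      intro u
      rcases mul_eq_zero.mp (h3 u) with hh | hh
      · exact absurd hh h.gram_det_ne_zero
      · exact hh
    have : h.T.repr x0 = 0 := Finsupp.ext h4
    exact (LinearEquiv.map_eq_zero_iff h.T.repr).mp this
  set e := h.C z * D with he
  have he2 : e * e = 0 := by
    have : e * e = (h.C z * D * h.C z) * D := by rw [he, mul_assoc, mul_assoc, mul_assoc]
    rw [this, stepC, zero_mul]
  have hnil : IsNilpotent (h.lmulLL e) := by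
    refine ⟨2, ?_⟩
    rw [pow_two, ← h.lmulLL_mul, he2]
    apply LinearMap.ext
    intro x
    simp
  have htr : IsNilpotent (h.TformL e) :=
    LinearMap.isNilpotent_trace_of_isNilpotent hnil
  have htr0 : h.TformL e = 0 := by
    obtain ⟨n, hn⟩ := htr
    rcases Nat.eq_zero_or_pos n with rfl | hpos
    · rw [pow_zero] at hn
      exact absurd hn one_ne_zero
    · exact pow_eq_zero_iff hpos.ne' |>.mp hn
  have hval : h.TformL e = (h.gram).det := by
    rw [he, h.Tform_mul_dualD, h.C.repr_self, Finsupp.single_apply, if_pos rfl, mul_one]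
  exact h.gram_det_ne_zero (by rw [← hval, htr0])

end Key

-- ============ order and cell lemmas ============
section Cells

lemma mem_cspan_univ (h : Hecke cs 𝔄 φ H) (a : H) : a ∈ h.Cspan Set.univ := by
  rw [h.cspan_univ]; trivial

lemma leftLE_step (h : Hecke cs 𝔄 φ H) {x y : W} (a : H)
    (hne : h.C.repr (a * h.C y) x ≠ 0) : h.leftLE Set.univ x y :=
  Relation.ReflTransGen.single ⟨trivial, trivial, a, h.mem_cspan_univ a, hne⟩

lemma rightLE_step (h : Hecke cs 𝔄 φ H) {x y : W} (a : H)
    (hne : h.C.repr (h.C y * a) x ≠ 0) : h.rightLE Set.univ x y :=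
  Relation.ReflTransGen.single ⟨trivial, trivial, a, h.mem_cspan_univ a, hne⟩

lemma leftEquiv_refl (h : Hecke cs 𝔄 φ H) (P : Set W) (x : W) : h.leftEquiv P x x :=
  ⟨Relation.ReflTransGen.refl, Relation.ReflTransGen.refl⟩

lemma rightEquiv_refl (h : Hecke cs 𝔄 φ H) (P : Set W) (x : W) : h.rightEquiv P x x :=
  ⟨Relation.ReflTransGen.refl, Relation.ReflTransGen.refl⟩

lemma leftEquiv_trans (h : Hecke cs 𝔄 φ H) {P : Set W} {x y z : W}
    (h1 : h.leftEquiv P x y) (h2 : h.leftEquiv P y z) : h.leftEquiv P x z :=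
  ⟨h1.1.trans h2.1, h2.2.trans h1.2⟩

lemma rightEquiv_trans (h : Hecke cs 𝔄 φ H) {P : Set W} {x y z : W}
    (h1 : h.rightEquiv P x y) (h2 : h.rightEquiv P y z) : h.rightEquiv P x z :=
  ⟨h1.1.trans h2.1, h2.2.trans h1.2⟩

/-- the left star property: `C_z C_m` has a nonzero `C_z`-coefficient for some `m` in the
left cell of `z` -/
theorem starL (h : Hecke cs 𝔄 φ H) [Finite W] (z : W) :
    ∃ m : W, h.leftEquiv Set.univ m z ∧ h.C.repr (h.C z * h.C m) z ≠ 0 := by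
  haveI : Fintype W := Fintype.ofFinite W
  obtain ⟨w, hw⟩ := h.key_nonzero z
  have h1 : h.C.repr (h.C z * (h.C w * h.C z)) z ≠ 0 := by
    rw [← mul_assoc]; exact hw
  obtain ⟨m, hm1, hm2⟩ := h.exists_mid_left h1
  exact ⟨m, ⟨h.leftLE_step (h.C w) hm1, h.leftLE_step (h.C z) hm2⟩, hm2⟩

/-- the right star property -/
theorem starR (h : Hecke cs 𝔄 φ H) [Finite W] (z : W) :
    ∃ t : W, h.rightEquiv Set.univ t z ∧ h.C.repr (h.C t * h.C z) z ≠ 0 := by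
  haveI : Fintype W := Fintype.ofFinite W
  obtain ⟨w, hw⟩ := h.key_nonzero z
  obtain ⟨t, ht1, ht2⟩ := h.exists_mid_right hw
  exact ⟨t, ⟨h.rightLE_step (h.C w) ht1, h.rightLE_step (h.C z) ht2⟩, ht2⟩

end Cells

-- ============ the master argument ============
section Master

lemma sign_smul_ne_zero {μ : W → ℤ} (hsign : IsSignMap μ) (s s' : W) (c : GA 𝔄)
    (hc : c ≠ 0) : (μ s * μ s') • c ≠ 0 := by
  have hval : μ s * μ s' = 1 ∨ μ s * μ s' = -1 := by
    rcases hsign s with h1 | h1 <;> rcases hsign s' with h2 | h2 <;> rw [h1, h2] <;> norm_num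
  intro h0
  rcases hval with hE | hE <;> rw [hE] at h0
  · rw [one_smul] at h0; exact hc h0
  · rw [neg_smul, one_smul, neg_eq_zero] at h0; exact hc h0

theorem strongly_left (h : Hecke cs 𝔄 φ H) [Finite W] {δ : W → W} {μ : W → ℤ}
    (hp : h.IsLeftCellularPair Set.univ δ μ) :
    h.IsStronglyLeftCellularPair Set.univ δ μ := by
  refine ⟨hp, fun w _ => ?_⟩
  obtain ⟨hsign, hcells⟩ := hp
  set Γ : Set W := {x | h.leftEquiv Set.univ x w} with hΓ
  have hΓcell : h.IsLeftCell Set.univ Γ := ⟨w, trivial, rfl⟩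
  obtain ⟨hLC1, hInj, hEQ⟩ := hcells Γ hΓcell
  have hwΓ : w ∈ Γ := h.leftEquiv_refl Set.univ w
  -- direction 1 : rightLE (δ w) w
  obtain ⟨m, hmw, hm⟩ := h.starL w
  have hmΓ : m ∈ Γ := hmw
  have hEQ1 := hEQ (h.C w) (h.mem_cspan_univ _) m hmΓ w hwΓ
  have hne1 : h.C.repr (h.C w * h.C (δ m)) (δ w) ≠ 0 := by
    intro h0
    rw [h0, smul_zero] at hEQ1
    exact hm hEQ1
  have dir1 : h.rightLE Set.univ (δ w) w := h.rightLE_step (h.C (δ m)) hne1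
  -- direction 2 : rightLE w (δ w)
  obtain ⟨m', hm'dw, hm'⟩ := h.starL (δ w)
  obtain ⟨w₀, _, hw₀⟩ := hLC1
  have hδwΓ : δ w ∈ δ '' Γ := ⟨w, hwΓ, rfl⟩
  have hδweq : h.leftEquiv Set.univ (δ w) w₀ := by
    rw [hw₀] at hδwΓ; exact hδwΓ
  have hm'mem : m' ∈ δ '' Γ := by
    rw [hw₀]
    exact h.leftEquiv_trans hm'dw hδweq
  obtain ⟨s, hsΓ, hsδ⟩ := hm'mem
  have hEQ2 := hEQ (h.C (δ w)) (h.mem_cspan_univ _) s hsΓ w hwΓ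
  have hne2 : h.C.repr (h.C (δ w) * h.C s) w ≠ 0 := by
    rw [hEQ2, hsδ]
    exact sign_smul_ne_zero hsign s w _ hm'
  exact ⟨dir1, h.rightLE_step (h.C s) hne2⟩

theorem strongly_right (h : Hecke cs 𝔄 φ H) [Finite W] {δ : W → W} {μ : W → ℤ}
    (hp : h.IsRightCellularPair Set.univ δ μ) :
    h.IsStronglyRightCellularPair Set.univ δ μ := by
  refine ⟨hp, fun w _ => ?_⟩
  obtain ⟨hsign, hcells⟩ := hp
  set Θ : Set W := {x | h.rightEquiv Set.univ x w} with hΘ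
  have hΘcell : h.IsRightCell Set.univ Θ := ⟨w, trivial, rfl⟩
  obtain ⟨hRC1, hInj, hEQ⟩ := hcells Θ hΘcell
  have hwΘ : w ∈ Θ := h.rightEquiv_refl Set.univ w
  -- direction 1 : leftLE (δ w) w
  obtain ⟨t, htw, ht⟩ := h.starR w
  have htΘ : t ∈ Θ := htw
  have hEQ1 := hEQ (h.C w) (h.mem_cspan_univ _) t htΘ w hwΘ
  have hne1 : h.C.repr (h.C (δ t) * h.C w) (δ w) ≠ 0 := by
    intro h0
    rw [h0, smul_zero] at hEQ1
    exact ht hEQ1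
  have dir1 : h.leftLE Set.univ (δ w) w := h.leftLE_step (h.C (δ t)) hne1
  -- direction 2 : leftLE w (δ w)
  obtain ⟨t', ht'dw, ht'⟩ := h.starR (δ w)
  obtain ⟨w₀, _, hw₀⟩ := hRC1
  have hδwΘ : δ w ∈ δ '' Θ := ⟨w, hwΘ, rfl⟩
  have hδweq : h.rightEquiv Set.univ (δ w) w₀ := by
    rw [hw₀] at hδwΘ; exact hδwΘ
  have ht'mem : t' ∈ δ '' Θ := by
    rw [hw₀]
    exact h.rightEquiv_trans ht'dw hδweq
  obtain ⟨s, hsΘ, hsδ⟩ := ht'mem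
  have hEQ2 := hEQ (h.C (δ w)) (h.mem_cspan_univ _) s hsΘ w hwΘ
  have hne2 : h.C.repr (h.C s * h.C (δ w)) w ≠ 0 := by
    rw [hEQ2, hsδ]
    exact sign_smul_ne_zero hsign s w _ ht'
  exact ⟨dir1, h.leftLE_step (h.C s) hne2⟩

end Master


/-- **Proposition 4.2** (cells and cacti): assume `W` is finite and that Lusztig's
Conjectures P4 and P9 hold for `(W,S,φ)`.  Then every left (respectively right) cellular
pair is strongly left (respectively right) cellular. -/
theorem prop_strongly (h : Hecke cs 𝔄 φ H) [Finite W]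
    (a : W → 𝔄) (ha : h.IsAFun Set.univ a)
    (hP4 : h.ConjP4 Set.univ a) (hP9 : h.ConjP9 Set.univ a)
    (δ : W → W) (μ : W → ℤ) :
    (h.IsLeftCellularPair Set.univ δ μ → h.IsStronglyLeftCellularPair Set.univ δ μ) ∧
    (h.IsRightCellularPair Set.univ δ μ → h.IsStronglyRightCellularPair Set.univ δ μ) := by
  exact ⟨fun hp => h.strongly_left hp, fun hp => h.strongly_right hp⟩

end Hecke

end CellsCacti
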